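/- Let S consist of 2n points given as n pairs {p_i, q_i} in a metric space, let T be a minimum spanning tree of S, let h be a maximum-weight edge of T, and let T_1, T_2 be the vertex sets of the two components of T after removing h. If both points of some pair lie in T_1 and both points of some pair lie in T_2, then EVERY feasible coloring S = R ∪ B satisfies mstCost(R) + mstCost(B) ≤ 6 · min over all feasible colorings S = R' ∪ B' of (mstCost(R') + mstCost(B')). -/

import Mathlib

variable {α : Type*} [MetricSpace α] [DecidableEq α]

/-- Two points are connected via the edge set `E` (edges usable in both directions). -/
def EdgeConn (E : Finset (α × α)) (x y : α) : Prop :=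
  Relation.ReflTransGen (fun a b => (a, b) ∈ E ∨ (b, a) ∈ E) x y

/-- `E` is (the edge set of) a spanning tree of the complete graph on the finite
point set `X`. -/
def IsSpanningTreeOn (X : Finset α) (E : Finset (α × α)) : Prop :=
  (∀ e ∈ E, e.1 ∈ X ∧ e.2 ∈ X) ∧ E.card + 1 = X.card ∧
    ∀ x ∈ X, ∀ y ∈ X, EdgeConn E x y

/-- The minimum total edge length of a spanning tree on `X`. -/
noncomputable def mstCost (X : Finset α) : ℝ :=
  sInf {c | ∃ E : Finset (α × α), IsSpanningTreeOn X E ∧ c = ∑ e ∈ E, dist e.1 e.2}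

set_option linter.unusedSectionVars false
set_option maxHeartbeats 1000000

noncomputable def pathCost : List α → ℝ
  | [] => 0
  | [_] => 0
  | a :: b :: l => dist a b + pathCost (b :: l)

lemma pathCost_nonneg : ∀ l : List α, 0 ≤ pathCost l
  | [] => le_refl _
  | [_] => le_refl _
  | a :: b :: l => by
      rw [pathCost]
      have := pathCost_nonneg (b :: l)
      positivity

lemma pathCost_tail_le (a : α) (l : List α) : pathCost l ≤ pathCost (a :: l) := by
  cases l with
  | nil => simp [pathCost]
  | cons b t => rw [pathCost]; have := dist_nonneg (x := a) (y := b); linarith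

lemma pathCost_cons_le (a b : α) (l : List α) :
    pathCost (a :: l) ≤ dist a b + pathCost (b :: l) := by
  cases l with
  | nil => simp [pathCost, dist_nonneg]
  | cons c t =>
      rw [pathCost, pathCost]
      have := dist_triangle a b c
      linarith

lemma pathCost_sublist_cons {l' l : List α} (h : l'.Sublist l) (a : α) :
    pathCost (a :: l') ≤ pathCost (a :: l) := by
  induction h generalizing a with
  | slnil => exact le_refl _
  | @cons l' l b _ ih =>
      calc pathCost (a :: l') ≤ pathCost (a :: l) := ih a
        _ ≤ dist a b + pathCost (b :: l) := pathCost_cons_le a b l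
        _ = pathCost (a :: b :: l) := by rw [pathCost]
  | @cons_cons l' l b _ ih =>
      show pathCost (a :: b :: l') ≤ pathCost (a :: b :: l)
      rw [pathCost, pathCost]
      have := ih b
      linarith

lemma pathCost_sublist {l' l : List α} (h : l'.Sublist l) : pathCost l' ≤ pathCost l := by
  induction h with
  | slnil => exact le_refl _
  | @cons l' l b _ ih => exact ih.trans (pathCost_tail_le b l)
  | @cons_cons l' l b h ih => exact pathCost_sublist_cons h b

lemma pathCost_split : ∀ (l : List α) (a : α) (m : List α),
    pathCost (l ++ a :: m) = pathCost (l ++ [a]) + pathCost (a :: m)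
  | [], a, m => by simp [pathCost]
  | [x], a, m => by simp [pathCost]
  | x :: y :: l, a, m => by
      have ih := pathCost_split (y :: l) a m
      simp only [List.cons_append] at *
      rw [pathCost, ih, pathCost]
      ring

lemma pathCost_insert (l₁ : List α) (w v : α) (l₂ : List α) :
    pathCost (l₁ ++ w :: v :: l₂) ≤ pathCost (l₁ ++ w :: l₂) + 2 * dist v w := by
  rw [pathCost_split l₁ w (v :: l₂), pathCost_split l₁ w l₂]
  have h1 : pathCost (w :: v :: l₂) = dist w v + pathCost (v :: l₂) := by rw [pathCost]
  have h2 : pathCost (v :: l₂) ≤ dist v w + pathCost (w :: l₂) := pathCost_cons_le v w l₂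
  rw [h1]
  rw [dist_comm w v]
  linarith

lemma head?_insert (l₁ : List α) (w v : α) (l₂ : List α) :
    (l₁ ++ w :: v :: l₂).head? = (l₁ ++ w :: l₂).head? := by
  cases l₁ <;> simp

lemma pathCost_cons_head {l : List α} {b : α} (h : l.head? = some b) (a : α) :
    pathCost (a :: l) = dist a b + pathCost l := by
  cases l with
  | nil => simp at h
  | cons c t => simp at h; subst h; rw [pathCost]

def edgesOf (l : List α) : Finset (α × α) := (l.zip l.tail).toFinset

lemma EdgeConn.mono {E E' : Finset (α × α)} (h : E ⊆ E') {x y : α}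
    (hc : EdgeConn E x y) : EdgeConn E' x y :=
  Relation.ReflTransGen.mono (r := fun a b => (a, b) ∈ E ∨ (b, a) ∈ E)
    (p := fun a b => (a, b) ∈ E' ∨ (b, a) ∈ E')
    (fun _ _ hab => hab.imp (fun h1 => h h1) (fun h1 => h h1)) x y hc

lemma EdgeConn.symm {E : Finset (α × α)} {x y : α} (hc : EdgeConn E x y) : EdgeConn E y x := by
  have hs : Symmetric (fun a b => (a, b) ∈ E ∨ (b, a) ∈ E) := fun a b hab => hab.symm
  exact (@Relation.ReflTransGen.stdSymm _ _ ⟨fun a b hab => hs hab⟩).symm _ _ hc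

lemma zip_tail_nodup : ∀ {l : List α}, l.Nodup → (l.zip l.tail).Nodup
  | [], _ => List.nodup_nil
  | [_], _ => List.nodup_nil
  | a :: b :: t, h => by
      have h' : (b :: t).Nodup := h.of_cons
      have ih := zip_tail_nodup h'
      show ((a, b) :: ((b :: t).zip t)).Nodup
      refine List.Nodup.cons ?_ ih
      intro hmem
      have := (List.of_mem_zip hmem).1
      exact (List.nodup_cons.1 h).1 this

lemma edgesOf_cons_cons (a b : α) (t : List α) :
    edgesOf (a :: b :: t) = insert (a, b) (edgesOf (b :: t)) := by
  simp [edgesOf, List.zip]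

lemma edgesOf_mem_endpoints {l : List α} {e : α × α} (h : e ∈ edgesOf l) :
    e.1 ∈ l ∧ e.2 ∈ l := by
  rw [edgesOf, List.mem_toFinset] at h
  obtain ⟨h1, h2⟩ := List.of_mem_zip (a := e.1) (b := e.2) (by simpa using h)
  exact ⟨h1, List.mem_of_mem_tail h2⟩

lemma edgesOf_conn_head : ∀ (a : α) (t : List α) (x : α), x ∈ a :: t →
    EdgeConn (edgesOf (a :: t)) a x
  | a, [], x, hx => by
      simp at hx; subst hx; exact Relation.ReflTransGen.refl
  | a, b :: t, x, hx => by
      rcases List.mem_cons.1 hx with rfl | hx'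
      · exact Relation.ReflTransGen.refl
      · have ih := edgesOf_conn_head b t x hx'
        have hsub : edgesOf (b :: t) ⊆ edgesOf (a :: b :: t) := by
          rw [edgesOf_cons_cons]; exact Finset.subset_insert _ _
        refine Relation.ReflTransGen.head ?_ (ih.mono hsub)
        left; rw [edgesOf_cons_cons]; exact Finset.mem_insert_self _ _

lemma pathCost_eq_sum : ∀ l : List α,
    pathCost l = ((l.zip l.tail).map (fun p => dist p.1 p.2)).sum
  | [] => by simp [pathCost]
  | [_] => by simp [pathCost]
  | a :: b :: t => by
      rw [pathCost, pathCost_eq_sum (b :: t)]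
      show _ = (((a,b) :: ((b :: t).zip t)).map _).sum
      simp

lemma spanning_of_list (l : List α) (hnd : l.Nodup) (hne : l ≠ []) :
    IsSpanningTreeOn l.toFinset (edgesOf l) ∧
      (∑ e ∈ edgesOf l, dist e.1 e.2) = pathCost l := by
  constructor
  · refine ⟨fun e he => by
      have := edgesOf_mem_endpoints he
      exact ⟨List.mem_toFinset.2 this.1, List.mem_toFinset.2 this.2⟩, ?_, ?_⟩
    · have hcard : (edgesOf l).card = (l.zip l.tail).length :=
        List.toFinset_card_of_nodup (zip_tail_nodup hnd)
      have hlen : (l.zip l.tail).length = l.length - 1 := by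
        rw [List.length_zip, List.length_tail]
        exact min_eq_right (Nat.sub_le _ _)
      have hl1 : 1 ≤ l.length := List.length_pos_iff.2 hne
      rw [hcard, hlen, List.toFinset_card_of_nodup hnd]
      omega
    · intro x hx y hy
      obtain ⟨a, t, rfl⟩ := List.exists_cons_of_ne_nil hne
      have h1 := edgesOf_conn_head a t x (List.mem_toFinset.1 hx)
      have h2 := edgesOf_conn_head a t y (List.mem_toFinset.1 hy)
      exact h1.symm.trans h2
  · rw [pathCost_eq_sum, edgesOf, List.sum_toFinset _ (zip_tail_nodup hnd)]

def costSet (X : Finset α) : Set ℝ :=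
  {c | ∃ E : Finset (α × α), IsSpanningTreeOn X E ∧ c = ∑ e ∈ E, dist e.1 e.2}

lemma mstCost_eq (X : Finset α) : mstCost X = sInf (costSet X) := rfl

lemma costSet_bddBelow (X : Finset α) : BddBelow (costSet X) := by
  refine ⟨0, fun c hc => ?_⟩
  obtain ⟨E, _, rfl⟩ := hc
  exact Finset.sum_nonneg fun e _ => dist_nonneg

-- leaf extraction ---------------------------------------------------------
def deg (E : Finset (α × α)) (v : α) : ℕ :=
  (E.filter (fun e => e.1 = v)).card + (E.filter (fun e => e.2 = v)).card

lemma sum_deg {X : Finset α} {E : Finset (α × α)}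
    (hE : ∀ e ∈ E, e.1 ∈ X ∧ e.2 ∈ X) : ∑ v ∈ X, deg E v = 2 * E.card := by
  have h1 : ∑ v ∈ X, (E.filter (fun e => e.1 = v)).card = E.card := by
    rw [show E.card = ∑ e ∈ E, 1 from (Finset.card_eq_sum_ones E)]
    simp_rw [Finset.card_filter]
    rw [Finset.sum_comm]
    refine Finset.sum_congr rfl fun e he => ?_
    simp_rw [eq_comm (a := e.1)]
    rw [Finset.sum_ite_eq' X e.1 (fun _ => 1)]
    simp [(hE e he).1]
  have h2 : ∑ v ∈ X, (E.filter (fun e => e.2 = v)).card = E.card := by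
    rw [show E.card = ∑ e ∈ E, 1 from (Finset.card_eq_sum_ones E)]
    simp_rw [Finset.card_filter]
    rw [Finset.sum_comm]
    refine Finset.sum_congr rfl fun e he => ?_
    simp_rw [eq_comm (a := e.2)]
    rw [Finset.sum_ite_eq' X e.2 (fun _ => 1)]
    simp [(hE e he).2]
  simp only [deg]
  rw [Finset.sum_add_distrib, h1, h2]; ring

lemma deg_pos {X : Finset α} {E : Finset (α × α)} (hT : IsSpanningTreeOn X E)
    (hX : 2 ≤ X.card) {v : α} (hv : v ∈ X) : 1 ≤ deg E v := by
  obtain ⟨y, hy, hyv⟩ : ∃ y ∈ X, y ≠ v := by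
    by_contra hcon
    push_neg at hcon
    have : X ⊆ {v} := fun z hz => Finset.mem_singleton.2 (hcon z hz)
    have := Finset.card_le_card this
    simp at this; omega
  have hconn : EdgeConn E v y := hT.2.2 v hv y hy
  rcases (Relation.ReflTransGen.cases_head hconn) with rfl | ⟨c, hvc, _⟩
  · exact absurd rfl hyv
  · rcases hvc with h1 | h1
    · have : (v, c) ∈ E.filter (fun e => e.1 = v) := Finset.mem_filter.2 ⟨h1, rfl⟩
      have := Finset.card_pos.2 ⟨_, this⟩
      unfold deg; omega
    · have : (c, v) ∈ E.filter (fun e => e.2 = v) := Finset.mem_filter.2 ⟨h1, rfl⟩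
      have := Finset.card_pos.2 ⟨_, this⟩
      unfold deg; omega

lemma exists_leaf {X : Finset α} {E : Finset (α × α)} (hT : IsSpanningTreeOn X E)
    (hX : 2 ≤ X.card) : ∃ v ∈ X, deg E v = 1 := by
  by_contra hcon
  push_neg at hcon
  have h2 : ∀ v ∈ X, 2 ≤ deg E v := fun v hv => by
    have := deg_pos hT hX hv
    have := hcon v hv
    omega
  have := Finset.card_nsmul_le_sum X (deg E) 2 h2
  rw [sum_deg hT.1] at this
  have hcard := hT.2.1
  simp only [smul_eq_mul] at this
  omega

lemma leaf_structure {E : Finset (α × α)} {v : α} (hdeg : deg E v = 1) :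
    ∃ e₀ ∈ E, ∃ w, w ≠ v ∧ (e₀ = (v, w) ∨ e₀ = (w, v)) ∧
      ∀ e ∈ E, e.1 = v ∨ e.2 = v → e = e₀ := by
  unfold deg at hdeg
  rcases Nat.add_eq_one_iff.1 hdeg with ⟨h1, h2⟩ | ⟨h1, h2⟩
  · -- filter1 card 0, filter2 card 1
    obtain ⟨e₀, he₀⟩ := Finset.card_eq_one.1 h2
    have he₀m : e₀ ∈ E.filter (fun e => e.2 = v) := he₀ ▸ Finset.mem_singleton_self e₀
    obtain ⟨he₀E, he₀2⟩ := Finset.mem_filter.1 he₀m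
    refine ⟨e₀, he₀E, e₀.1, ?_, ?_, ?_⟩
    · intro hcon
      have : e₀ ∈ E.filter (fun e => e.1 = v) := Finset.mem_filter.2 ⟨he₀E, hcon⟩
      rw [Finset.card_eq_zero.1 h1] at this; exact absurd this (Finset.notMem_empty _)
    · right; rw [← he₀2]
    · intro e heE hev
      rcases hev with hev | hev
      · have : e ∈ E.filter (fun e => e.1 = v) := Finset.mem_filter.2 ⟨heE, hev⟩
        rw [Finset.card_eq_zero.1 h1] at this; exact absurd this (Finset.notMem_empty _)
      · have : e ∈ E.filter (fun e => e.2 = v) := Finset.mem_filter.2 ⟨heE, hev⟩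
        rw [he₀] at this; exact Finset.mem_singleton.1 this
  · obtain ⟨e₀, he₀⟩ := Finset.card_eq_one.1 h1
    have he₀m : e₀ ∈ E.filter (fun e => e.1 = v) := he₀ ▸ Finset.mem_singleton_self e₀
    obtain ⟨he₀E, he₀1⟩ := Finset.mem_filter.1 he₀m
    refine ⟨e₀, he₀E, e₀.2, ?_, ?_, ?_⟩
    · intro hcon
      have : e₀ ∈ E.filter (fun e => e.2 = v) := Finset.mem_filter.2 ⟨he₀E, hcon⟩
      rw [Finset.card_eq_zero.1 h2] at this; exact absurd this (Finset.notMem_empty _)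
    · left; rw [← he₀1]
    · intro e heE hev
      rcases hev with hev | hev
      · have : e ∈ E.filter (fun e => e.1 = v) := Finset.mem_filter.2 ⟨heE, hev⟩
        rw [he₀] at this; exact Finset.mem_singleton.1 this
      · have : e ∈ E.filter (fun e => e.2 = v) := Finset.mem_filter.2 ⟨heE, hev⟩
        rw [Finset.card_eq_zero.1 h2] at this; exact absurd this (Finset.notMem_empty _)

lemma conn_avoid {E : Finset (α × α)} {e₀ : α × α} {v w : α} (hw : w ≠ v)
    (hor : e₀ = (v, w) ∨ e₀ = (w, v))
    (huniq : ∀ e ∈ E, e.1 = v ∨ e.2 = v → e = e₀)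
    {x : α} (hxv : x ≠ v) : ∀ {y : α}, EdgeConn E x y →
      (y ≠ v → EdgeConn (E.erase e₀) x y) ∧ (y = v → EdgeConn (E.erase e₀) x w) := by
  intro y hconn
  induction hconn with
  | refl => exact ⟨fun _ => Relation.ReflTransGen.refl, fun hv => absurd hv hxv⟩
  | @tail b c hxb hbc ih =>
      by_cases hb : b = v
      · have hxw : EdgeConn (E.erase e₀) x w := ih.2 hb
        subst hb
        -- step edge touches v, so c = w
        have hc : c = w := by
          rcases hbc with hm | hm
          · have := huniq _ hm (Or.inl rfl)
            rcases hor with h0 | h0 <;> rw [h0] at this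
            · exact (Prod.mk.injEq _ _ _ _ ▸ this).2
            · exfalso; exact hw ((Prod.mk.injEq _ _ _ _ ▸ this).1.symm ▸ rfl)
          · have := huniq _ hm (Or.inr rfl)
            rcases hor with h0 | h0 <;> rw [h0] at this
            · exact absurd (congrArg Prod.snd this).symm hw
            · exact (Prod.mk.injEq _ _ _ _ ▸ this).1
        subst hc
        exact ⟨fun _ => hxw, fun hcv => absurd hcv hw⟩
      · have hxb' : EdgeConn (E.erase e₀) x b := ih.1 hb
        by_cases hc : c = v
        · -- step edge touches v with other endpoint b, so b = w
          have hbw : b = w := by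
            subst hc
            rcases hbc with hm | hm
            · have := huniq _ hm (Or.inr rfl)
              rcases hor with h0 | h0 <;> rw [h0] at this
              · exact absurd (Prod.mk.injEq _ _ _ _ ▸ this).1 hb
              · exact (Prod.mk.injEq _ _ _ _ ▸ this).1
            · have := huniq _ hm (Or.inl rfl)
              rcases hor with h0 | h0 <;> rw [h0] at this
              · exact (Prod.mk.injEq _ _ _ _ ▸ this).2
              · exact absurd (congrArg Prod.fst this).symm hw
          exact ⟨fun hcv => absurd hc hcv, fun _ => by rw [← hbw]; exact hxb'⟩
        · -- step edge avoids v entirely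
          have hstep : (b, c) ∈ E.erase e₀ ∨ (c, b) ∈ E.erase e₀ := by
            rcases hbc with hm | hm
            · left
              refine Finset.mem_erase.2 ⟨?_, hm⟩
              intro hcon
              rcases hor with h0 | h0 <;> rw [h0] at hcon
              · exact hb (Prod.mk.injEq _ _ _ _ ▸ hcon).1
              · exact hc (Prod.mk.injEq _ _ _ _ ▸ hcon).2
            · right
              refine Finset.mem_erase.2 ⟨?_, hm⟩
              intro hcon
              rcases hor with h0 | h0 <;> rw [h0] at hcon
              · exact hc (Prod.mk.injEq _ _ _ _ ▸ hcon).1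
              · exact hb (Prod.mk.injEq _ _ _ _ ▸ hcon).2
          exact ⟨fun _ => hxb'.tail hstep, fun hcv => absurd hcv hc⟩

lemma tree_to_list : ∀ (N : ℕ) (X : Finset α) (E : Finset (α × α)), X.card ≤ N →
    IsSpanningTreeOn X E → ∀ s ∈ X, ∃ l : List α, l.Nodup ∧ l.toFinset = X ∧
      l.head? = some s ∧ pathCost l ≤ 2 * ∑ e ∈ E, dist e.1 e.2 := by
  intro N
  induction N with
  | zero =>
      intro X E hcard hT s hs
      exact absurd (Finset.card_pos.2 ⟨s, hs⟩) (by omega)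
  | succ N ih =>
      intro X E hcard hT s hs
      by_cases h1 : X.card ≤ 1
      · have hX : X = {s} := by
          apply Finset.eq_singleton_iff_unique_mem.2
          refine ⟨hs, fun y hy => ?_⟩
          by_contra hne
          have : 2 ≤ X.card := Finset.one_lt_card.2 ⟨y, hy, s, hs, hne⟩
          omega
        have hE : E = ∅ := by
          have := hT.2.1
          rw [hX] at this
          simp at this
          exact this
        refine ⟨[s], by simp, by simp [hX], rfl, ?_⟩
        rw [hE]
        simp [pathCost]
      · have hX2 : 2 ≤ X.card := by omega
        obtain ⟨v, hvX, hdeg⟩ := exists_leaf hT hX2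
        obtain ⟨e₀, he₀E, w, hwv, hor, huniq⟩ := leaf_structure hdeg
        have hwX : w ∈ X := by
          rcases hor with h0 | h0
          · have := (hT.1 e₀ he₀E).2; rw [h0] at this; exact this
          · have := (hT.1 e₀ he₀E).1; rw [h0] at this; exact this
        have hwX' : w ∈ X.erase v := Finset.mem_erase.2 ⟨hwv, hwX⟩
        have hE1 : 1 ≤ E.card := Finset.card_pos.2 ⟨e₀, he₀E⟩
        have huniq1 : ∀ e ∈ E, e ≠ e₀ → e.1 ≠ v ∧ e.2 ≠ v := by
          intro e he hne
          constructor
          · intro hcon; exact hne (huniq e he (Or.inl hcon))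
          · intro hcon; exact hne (huniq e he (Or.inr hcon))
        have hT' : IsSpanningTreeOn (X.erase v) (E.erase e₀) := by
          refine ⟨?_, ?_, ?_⟩
          · intro e he
            obtain ⟨hne, heE⟩ := Finset.mem_erase.1 he
            obtain ⟨h1, h2⟩ := huniq1 e heE hne
            exact ⟨Finset.mem_erase.2 ⟨h1, (hT.1 e heE).1⟩,
                   Finset.mem_erase.2 ⟨h2, (hT.1 e heE).2⟩⟩
          · rw [Finset.card_erase_of_mem he₀E, Finset.card_erase_of_mem hvX]
            have := hT.2.1
            omega
          · intro x hx y hy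
            obtain ⟨hxv, hxX⟩ := Finset.mem_erase.1 hx
            obtain ⟨hyv, hyX⟩ := Finset.mem_erase.1 hy
            exact (conn_avoid hwv hor huniq hxv (hT.2.2 x hxX y hyX)).1 hyv
        have hcard' : (X.erase v).card ≤ N := by
          rw [Finset.card_erase_of_mem hvX]; omega
        have hsum : ∑ e ∈ E.erase e₀, dist e.1 e.2
            = (∑ e ∈ E, dist e.1 e.2) - dist v w := by
          rw [Finset.sum_erase_eq_sub he₀E]
          rcases hor with h0 | h0 <;> rw [h0] <;> simp [dist_comm]
        by_cases hsv : s = v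
        · obtain ⟨l', hnd', htf', hhd', hpc'⟩ :=
            ih (X.erase v) (E.erase e₀) hcard' hT' w hwX'
          have hvl' : v ∉ l' := by
            rw [← List.mem_toFinset, htf']
            simp
          refine ⟨v :: l', List.nodup_cons.2 ⟨hvl', hnd'⟩, ?_, by simp [hsv], ?_⟩
          · simp [htf', Finset.insert_erase hvX]
          · rw [pathCost_cons_head hhd' v, hsum] at *
            have := dist_nonneg (x := v) (y := w)
            linarith
        · have hsX' : s ∈ X.erase v := Finset.mem_erase.2 ⟨hsv, hs⟩
          obtain ⟨l', hnd', htf', hhd', hpc'⟩ :=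
            ih (X.erase v) (E.erase e₀) hcard' hT' s hsX'
          have hvl' : v ∉ l' := by
            rw [← List.mem_toFinset, htf']
            simp
          have hwl' : w ∈ l' := by rw [← List.mem_toFinset, htf']; exact hwX'
          obtain ⟨l₁, l₂, hsplit⟩ := List.append_of_mem hwl'
          have hperm : (l₁ ++ w :: v :: l₂).Perm (v :: l') := by
            rw [hsplit]
            have h1 : l₁ ++ w :: v :: l₂ = (l₁ ++ [w]) ++ v :: l₂ := by simp
            have h2 : ((l₁ ++ [w]) ++ v :: l₂).Perm (v :: ((l₁ ++ [w]) ++ l₂)) :=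
              List.perm_middle
            rw [h1]
            simpa using h2
          refine ⟨l₁ ++ w :: v :: l₂, ?_, ?_, ?_, ?_⟩
          · exact hperm.nodup_iff.2 (List.nodup_cons.2 ⟨hvl', hnd'⟩)
          · rw [List.toFinset_eq_of_perm _ _ hperm]
            simp [htf', Finset.insert_erase hvX]
          · rw [head?_insert, ← hsplit, hhd']
          · calc pathCost (l₁ ++ w :: v :: l₂)
                ≤ pathCost (l₁ ++ w :: l₂) + 2 * dist v w := pathCost_insert l₁ w v l₂
              _ = pathCost l' + 2 * dist v w := by rw [hsplit]
              _ ≤ 2 * ∑ e ∈ E, dist e.1 e.2 := by rw [hsum] at hpc'; linarith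

lemma costSet_nonempty {X : Finset α} (hX : X.Nonempty) : (costSet X).Nonempty := by
  refine ⟨∑ e ∈ edgesOf X.toList, dist e.1 e.2, edgesOf X.toList, ?_, rfl⟩
  have h := spanning_of_list X.toList (Finset.nodup_toList X) ?_
  · rw [Finset.toList_toFinset] at h
    exact h.1
  · intro hcon
    have := Finset.length_toList X
    rw [hcon] at this
    simp at this
    exact hX.ne_empty (Finset.card_eq_zero.1 this.symm)

lemma mstCost_le_of_spanning {X : Finset α} {E : Finset (α × α)}
    (hE : IsSpanningTreeOn X E) : mstCost X ≤ ∑ e ∈ E, dist e.1 e.2 :=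
  csInf_le (costSet_bddBelow X) ⟨E, hE, rfl⟩

lemma mstCost_subset {U X : Finset α} {E : Finset (α × α)} (hU : U ⊆ X)
    (hUne : U.Nonempty) (hE : IsSpanningTreeOn X E) :
    mstCost U ≤ 2 * ∑ e ∈ E, dist e.1 e.2 := by
  obtain ⟨s, hs⟩ := hUne
  obtain ⟨l, hnd, htf, _, hpc⟩ := tree_to_list X.card X E le_rfl hE s (hU hs)
  set lU := l.filter (fun x => x ∈ U) with hlU
  have hndU : lU.Nodup := hnd.filter _
  have htfU : lU.toFinset = U := by
    rw [hlU, List.toFinset_filter, htf]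
    ext x
    simp only [Finset.mem_filter, decide_eq_true_eq]
    exact ⟨fun hx => hx.2, fun hx => ⟨hU hx, hx⟩⟩
  have hneU : lU ≠ [] := by
    intro hcon
    rw [hcon] at htfU
    simp at htfU
    exact absurd (htfU ▸ hs) (Finset.notMem_empty s)
  obtain ⟨hspan, hsum⟩ := spanning_of_list lU hndU hneU
  rw [htfU] at hspan
  calc mstCost U ≤ ∑ e ∈ edgesOf lU, dist e.1 e.2 := mstCost_le_of_spanning hspan
    _ = pathCost lU := hsum
    _ ≤ pathCost l := pathCost_sublist (List.filter_sublist (l := l))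
    _ ≤ 2 * ∑ e ∈ E, dist e.1 e.2 := hpc

lemma exists_crossing {P Q : Finset α} (hdisj : Disjoint P Q) {E : Finset (α × α)}
    (hE : ∀ e ∈ E, e.1 ∈ P ∪ Q ∧ e.2 ∈ P ∪ Q) {a b : α} (ha : a ∈ P) (hb : b ∈ Q)
    (hconn : EdgeConn E a b) :
    ∃ e ∈ E, (e.1 ∈ P ∧ e.2 ∈ Q) ∨ (e.1 ∈ Q ∧ e.2 ∈ P) := by
  induction hconn with
  | refl => exact absurd hb (Finset.disjoint_left.1 hdisj ha)
  | @tail c d hac hcd ih =>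
      have hcPQ : c ∈ P ∪ Q := by
        rcases hcd with hm | hm
        · exact (hE _ hm).1
        · exact (hE _ hm).2
      rcases Finset.mem_union.1 hcPQ with hcP | hcQ
      · rcases hcd with hm | hm
        · exact ⟨(c, d), hm, Or.inl ⟨hcP, hb⟩⟩
        · exact ⟨(d, c), hm, Or.inr ⟨hb, hcP⟩⟩
      · exact ih hcQ

lemma mstCost_lower {X P Q : Finset α} (hXne : X.Nonempty) (hdisj : Disjoint P Q)
    (hXPQ : X ⊆ P ∪ Q) {xp xq : α} (hxp : xp ∈ X) (hxp' : xp ∈ P)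
    (hxq : xq ∈ X) (hxq' : xq ∈ Q) {c : ℝ}
    (hc : ∀ x ∈ P, ∀ y ∈ Q, c ≤ dist x y) : c ≤ mstCost X := by
  refine le_csInf (costSet_nonempty hXne) ?_
  rintro cost ⟨E, hE, rfl⟩
  have hEnd : ∀ e ∈ E, e.1 ∈ P ∪ Q ∧ e.2 ∈ P ∪ Q := fun e he =>
    ⟨hXPQ (hE.1 e he).1, hXPQ (hE.1 e he).2⟩
  obtain ⟨e, heE, hcross⟩ :=
    exists_crossing hdisj hEnd hxp' hxq' (hE.2.2 xp hxp xq hxq)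
  have hce : c ≤ dist e.1 e.2 := by
    rcases hcross with ⟨h1, h2⟩ | ⟨h1, h2⟩
    · exact hc _ h1 _ h2
    · rw [dist_comm]; exact hc _ h2 _ h1
  calc c ≤ dist e.1 e.2 := hce
    _ ≤ ∑ e ∈ E, dist e.1 e.2 :=
        Finset.single_le_sum (fun e _ => dist_nonneg) heE

lemma mstCost_union_le {U V : Finset α} (hdisj : Disjoint U V) {a b : α}
    (ha : a ∈ U) (hb : b ∈ V) :
    mstCost (U ∪ V) ≤ mstCost U + mstCost V + dist a b := by
  have hUne : U.Nonempty := ⟨a, ha⟩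
  have hVne : V.Nonempty := ⟨b, hb⟩
  have key : ∀ EU ∈ {E | IsSpanningTreeOn U E}, ∀ EV ∈ {E | IsSpanningTreeOn V E},
      mstCost (U ∪ V) ≤ (∑ e ∈ EU, dist e.1 e.2) + (∑ e ∈ EV, dist e.1 e.2) + dist a b := by
    intro EU hEU EV hEV
    simp only [Set.mem_setOf_eq] at hEU hEV
    have hdisjE : Disjoint EU EV := by
      rw [Finset.disjoint_left]
      intro e heU heV
      exact Finset.disjoint_left.1 hdisj (hEU.1 e heU).1 (hEV.1 e heV).1
    have habU : (a, b) ∉ EU ∪ EV := by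
      intro hcon
      rcases Finset.mem_union.1 hcon with hm | hm
      · exact Finset.disjoint_left.1 hdisj (hEU.1 _ hm).2 hb
      · exact Finset.disjoint_left.1 hdisj ha (hEV.1 _ hm).1
    have hspan : IsSpanningTreeOn (U ∪ V) (insert (a, b) (EU ∪ EV)) := by
      refine ⟨?_, ?_, ?_⟩
      · intro e he
        rcases Finset.mem_insert.1 he with rfl | he'
        · exact ⟨Finset.mem_union_left _ ha, Finset.mem_union_right _ hb⟩
        · rcases Finset.mem_union.1 he' with hm | hm
          · exact ⟨Finset.mem_union_left _ (hEU.1 e hm).1, Finset.mem_union_left _ (hEU.1 e hm).2⟩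
          · exact ⟨Finset.mem_union_right _ (hEV.1 e hm).1, Finset.mem_union_right _ (hEV.1 e hm).2⟩
      · rw [Finset.card_insert_of_notMem habU, Finset.card_union_of_disjoint hdisjE,
            Finset.card_union_of_disjoint hdisj]
        have := hEU.2.1
        have := hEV.2.1
        omega
      · have hsub : EU ∪ EV ⊆ insert (a, b) (EU ∪ EV) := Finset.subset_insert _ _
        have hsubU : EU ⊆ insert (a, b) (EU ∪ EV) :=
          (Finset.subset_union_left).trans hsub
        have hsubV : EV ⊆ insert (a, b) (EU ∪ EV) :=
          (Finset.subset_union_right).trans hsub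
        have hstep : EdgeConn (insert (a, b) (EU ∪ EV)) a b :=
          Relation.ReflTransGen.single (Or.inl (Finset.mem_insert_self _ _))
        intro x hx y hy
        have hconn : ∀ z ∈ U ∪ V, EdgeConn (insert (a, b) (EU ∪ EV)) a z := by
          intro z hz
          rcases Finset.mem_union.1 hz with hzU | hzV
          · exact (hEU.2.2 a ha z hzU).mono hsubU
          · exact hstep.trans ((hEV.2.2 b hb z hzV).mono hsubV)
        exact ((hconn x hx).symm).trans (hconn y hy)
    calc mstCost (U ∪ V) ≤ ∑ e ∈ insert (a, b) (EU ∪ EV), dist e.1 e.2 :=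
          mstCost_le_of_spanning hspan
      _ = dist a b + ((∑ e ∈ EU, dist e.1 e.2) + (∑ e ∈ EV, dist e.1 e.2)) := by
          rw [Finset.sum_insert habU, Finset.sum_union hdisjE]
      _ = _ := by ring
  have h1 : mstCost (U ∪ V) - dist a b - mstCost V ≤ mstCost U := by
    refine le_csInf (costSet_nonempty hUne) ?_
    rintro cU ⟨EU, hEU, rfl⟩
    have h2 : mstCost (U ∪ V) - dist a b - (∑ e ∈ EU, dist e.1 e.2) ≤ mstCost V := by
      refine le_csInf (costSet_nonempty hVne) ?_
      rintro cV ⟨EV, hEV, rfl⟩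
      have := key EU hEU EV hEV
      linarith
    linarith
  linarith

/-- `S` consists of `n` pairs `{pts (i, false), pts (i, true)}`. Let `T` be
a minimum spanning tree of `S`, `h` a maximum-weight edge of `T`, and `T₁, T₂` the vertex
sets of the two components of `T` after removing `h`. If both points of some pair lie in
`T₁` and both points of some pair lie in `T₂`, then EVERY feasible coloring `S = R ∪ B`
satisfies `mstCost R + mstCost B ≤ 6 · min over feasible colorings of (mstCost R' + mstCost B')`. -/
theorem every_coloring_six_approx
    (n : ℕ) (hn : 1 ≤ n)
    (pts : Fin n × Bool → α) (hinj : Function.Injective pts)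
    (S : Finset α) (hS : S = Finset.image pts Finset.univ)
    (T : Finset (α × α)) (hT : IsSpanningTreeOn S T)
    (hTmin : (∑ e ∈ T, dist e.1 e.2) = mstCost S)
    (h : α × α) (hh : h ∈ T) (hmax : ∀ e ∈ T, dist e.1 e.2 ≤ dist h.1 h.2)
    (T₁ T₂ : Finset α) (hpart : T₁ ∪ T₂ = S) (hdisj : Disjoint T₁ T₂)
    (hne1 : T₁.Nonempty) (hne2 : T₂.Nonempty)
    (hcomp : ∀ x ∈ S, ∀ y ∈ S,
      EdgeConn (T.erase h) x y ↔ ((x ∈ T₁ ∧ y ∈ T₁) ∨ (x ∈ T₂ ∧ y ∈ T₂)))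
    (hpairT₁ : ∃ i : Fin n, pts (i, false) ∈ T₁ ∧ pts (i, true) ∈ T₁)
    (hpairT₂ : ∃ i : Fin n, pts (i, false) ∈ T₂ ∧ pts (i, true) ∈ T₂)
    (σ : Fin n → Bool)
    (R B : Finset α)
    (hR : R = Finset.image (fun i => pts (i, σ i)) Finset.univ)
    (hB : B = Finset.image (fun i => pts (i, !(σ i))) Finset.univ) :
    mstCost R + mstCost B ≤ 6 *
      ⨅ σ' : Fin n → Bool,
        (mstCost (Finset.image (fun i => pts (i, σ' i)) Finset.univ) +
         mstCost (Finset.image (fun i => pts (i, !(σ' i))) Finset.univ)) := by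

  have hT₁S : T₁ ⊆ S := fun z hz => hpart ▸ Finset.mem_union_left T₂ hz
  have hT₂S : T₂ ⊆ S := fun z hz => hpart ▸ Finset.mem_union_right T₁ hz
  obtain ⟨i₁, hi₁f, hi₁t⟩ := hpairT₁
  obtain ⟨i₂, hi₂f, hi₂t⟩ := hpairT₂
  have hi₁ : ∀ b : Bool, pts (i₁, b) ∈ T₁ := fun b => by cases b; exacts [hi₁f, hi₁t]
  have hi₂ : ∀ b : Bool, pts (i₂, b) ∈ T₂ := fun b => by cases b; exacts [hi₂f, hi₂t]
  -- the cut property: any edge across the (T₁, T₂) cut is at least as long as h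
  have hcut : ∀ x ∈ T₁, ∀ y ∈ T₂, dist h.1 h.2 ≤ dist x y := by
    by_contra hcon
    push_neg at hcon
    obtain ⟨x, hx, y, hy, hlt⟩ := hcon
    have hxS := hT₁S hx
    have hyS := hT₂S hy
    have hxyT' : (x, y) ∉ T.erase h := by
      intro hm
      have hc : EdgeConn (T.erase h) x y := Relation.ReflTransGen.single (Or.inl hm)
      rcases (hcomp x hxS y hyS).1 hc with ⟨-, hy1⟩ | ⟨hx2, -⟩
      · exact (Finset.disjoint_left.1 hdisj hy1) hy
      · exact (Finset.disjoint_left.1 hdisj hx) hx2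
    have hsub : T.erase h ⊆ insert (x, y) (T.erase h) := Finset.subset_insert _ _
    have hstep : EdgeConn (insert (x, y) (T.erase h)) x y :=
      Relation.ReflTransGen.single (Or.inl (Finset.mem_insert_self _ _))
    have hsame₁ : ∀ a ∈ T₁, ∀ b ∈ T₁, EdgeConn (insert (x, y) (T.erase h)) a b :=
      fun a ha b hb =>
        (((hcomp a (hT₁S ha) b (hT₁S hb)).2 (Or.inl ⟨ha, hb⟩)).mono hsub)
    have hsame₂ : ∀ a ∈ T₂, ∀ b ∈ T₂, EdgeConn (insert (x, y) (T.erase h)) a b :=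
      fun a ha b hb =>
        (((hcomp a (hT₂S ha) b (hT₂S hb)).2 (Or.inr ⟨ha, hb⟩)).mono hsub)
    have hcross : ∀ a ∈ T₁, ∀ b ∈ T₂, EdgeConn (insert (x, y) (T.erase h)) a b :=
      fun a ha b hb => ((hsame₁ a ha x hx).trans hstep).trans (hsame₂ y hy b hb)
    have hspan : IsSpanningTreeOn S (insert (x, y) (T.erase h)) := by
      refine ⟨?_, ?_, ?_⟩
      · intro e he
        rcases Finset.mem_insert.1 he with rfl | he'
        · exact ⟨hxS, hyS⟩
        · exact hT.1 e (Finset.mem_of_mem_erase he')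
      · rw [Finset.card_insert_of_notMem hxyT', Finset.card_erase_of_mem hh]
        have h1 := hT.2.1
        have h2 : 1 ≤ T.card := Finset.card_pos.2 ⟨h, hh⟩
        omega
      · intro a haS b hbS
        have haT : a ∈ T₁ ∨ a ∈ T₂ := by rw [← hpart] at haS; exact Finset.mem_union.1 haS
        have hbT : b ∈ T₁ ∨ b ∈ T₂ := by rw [← hpart] at hbS; exact Finset.mem_union.1 hbS
        rcases haT with h1 | h1 <;> rcases hbT with h2 | h2
        · exact hsame₁ a h1 b h2
        · exact hcross a h1 b h2
        · exact (hcross b h2 a h1).symm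
        · exact hsame₂ a h1 b h2
    have hcost := mstCost_le_of_spanning hspan
    rw [Finset.sum_insert hxyT', Finset.sum_erase_eq_sub hh] at hcost
    have hT' : (∑ e ∈ T, dist e.1 e.2) = mstCost S := hTmin
    linarith
  -- per-coloring sets
  have hsubS : ∀ σ' : Fin n → Bool,
      Finset.image (fun i => pts (i, σ' i)) Finset.univ ⊆ S := by
    intro σ' z hz
    rw [hS]
    obtain ⟨i, -, rfl⟩ := Finset.mem_image.1 hz
    exact Finset.mem_image_of_mem pts (Finset.mem_univ (i, σ' i))
  have hne : ∀ σ' : Fin n → Bool,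
      (Finset.image (fun i => pts (i, σ' i)) Finset.univ).Nonempty :=
    fun σ' => ⟨pts (⟨0, hn⟩, σ' ⟨0, hn⟩),
      Finset.mem_image_of_mem _ (Finset.mem_univ (⟨0, hn⟩ : Fin n))⟩
  have hunion : ∀ σ' : Fin n → Bool,
      Finset.image (fun i => pts (i, σ' i)) Finset.univ ∪
        Finset.image (fun i => pts (i, !(σ' i))) Finset.univ = S := by
    intro σ'
    apply Finset.Subset.antisymm
    · exact Finset.union_subset (hsubS σ') (hsubS (fun i => !(σ' i)))
    · rw [hS]
      intro z hz
      obtain ⟨⟨i, b⟩, -, rfl⟩ := Finset.mem_image.1 hz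
      by_cases hb : b = σ' i
      · subst hb
        exact Finset.mem_union_left _ (Finset.mem_image_of_mem _ (Finset.mem_univ i))
      · have hb' : b = !(σ' i) := by cases b <;> cases hbs : σ' i <;> simp_all
        subst hb'
        exact Finset.mem_union_right _ (Finset.mem_image_of_mem _ (Finset.mem_univ i))
  have hdisjRB : ∀ σ' : Fin n → Bool,
      Disjoint (Finset.image (fun i => pts (i, σ' i)) Finset.univ)
        (Finset.image (fun i => pts (i, !(σ' i))) Finset.univ) := by
    intro σ'
    rw [Finset.disjoint_left]
    intro z hzR hzB
    obtain ⟨i, -, rfl⟩ := Finset.mem_image.1 hzR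
    obtain ⟨j, -, hj⟩ := Finset.mem_image.1 hzB
    have heq := hinj hj
    have h1 : j = i := congrArg Prod.fst heq
    subst h1
    have h2 := congrArg Prod.snd heq
    simp at h2
  -- lower bound
  have hlow : ∀ σ' : Fin n → Bool,
      dist h.1 h.2 ≤ mstCost (Finset.image (fun i => pts (i, σ' i)) Finset.univ) := by
    intro σ'
    refine mstCost_lower (hne σ') hdisj ?_
      (Finset.mem_image_of_mem _ (Finset.mem_univ i₁)) (hi₁ (σ' i₁))
      (Finset.mem_image_of_mem _ (Finset.mem_univ i₂)) (hi₂ (σ' i₂)) hcut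
    rw [hpart]
    exact hsubS σ'
  -- middle bound
  have hmid : ∀ σ' : Fin n → Bool,
      mstCost S ≤ mstCost (Finset.image (fun i => pts (i, σ' i)) Finset.univ) +
        mstCost (Finset.image (fun i => pts (i, !(σ' i))) Finset.univ) + dist h.1 h.2 := by
    intro σ'
    have haR : pts (i₁, σ' i₁) ∈ Finset.image (fun i => pts (i, σ' i)) Finset.univ :=
      Finset.mem_image_of_mem _ (Finset.mem_univ i₁)
    have hbB : pts (i₁, !(σ' i₁)) ∈ Finset.image (fun i => pts (i, !(σ' i))) Finset.univ :=
      Finset.mem_image_of_mem _ (Finset.mem_univ i₁)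
    have haS : pts (i₁, σ' i₁) ∈ S := hsubS σ' haR
    have hbS : pts (i₁, !(σ' i₁)) ∈ S := hsubS (fun i => !(σ' i)) hbB
    obtain ⟨e, heT, hcross⟩ := exists_crossing (hdisjRB σ')
      (fun e he => by rw [hunion σ']; exact hT.1 e he) haR hbB
      (hT.2.2 _ haS _ hbS)
    have hde := hmax e heT
    rcases hcross with ⟨h1, h2⟩ | ⟨h1, h2⟩
    · have hu := mstCost_union_le (hdisjRB σ') h1 h2
      rw [hunion σ'] at hu
      linarith
    · have hu := mstCost_union_le (hdisjRB σ') h2 h1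
      rw [hunion σ'] at hu
      rw [dist_comm e.2 e.1] at hu
      linarith
  -- upper bounds for the given coloring
  have hupR : mstCost R ≤ 2 * mstCost S := by
    rw [hR, ← hTmin]
    exact mstCost_subset (hsubS σ) (hne σ) hT
  have hupB : mstCost B ≤ 2 * mstCost S := by
    rw [hB, ← hTmin]
    exact mstCost_subset (hsubS (fun i => !(σ i))) (hne (fun i => !(σ i))) hT
  -- combine for each σ'
  have hkey : ∀ σ' : Fin n → Bool, (mstCost R + mstCost B) / 6 ≤
      mstCost (Finset.image (fun i => pts (i, σ' i)) Finset.univ) +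
        mstCost (Finset.image (fun i => pts (i, !(σ' i))) Finset.univ) := by
    intro σ'
    have h1 := hmid σ'
    have h2 := hlow σ'
    have h3 := hlow (fun i => !(σ' i))
    linarith
  have hfin := le_ciInf hkey
  linarith
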